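/- The competition number of the hexahedron graph (the 3-dimensional cube graph Q_3) equals 6. -/

import Mathlib

open SimpleGraph

/-- The competition graph of a digraph `D` (given as a relation): distinct vertices
`x`, `y` are adjacent iff they have a common out-neighbor in `D`. -/
def CompetitionGraph {V : Type*} (D : V → V → Prop) : SimpleGraph V where
  Adj x y := x ≠ y ∧ ∃ v, D x v ∧ D y v
  symm := by refine ⟨?_⟩; rintro x y ⟨h, v, hx, hy⟩; exact ⟨h.symm, v, hy, hx⟩
  loopless := by refine ⟨?_⟩; rintro x ⟨h, -⟩; exact h rfl

/-- A digraph is acyclic iff it has no directed cycle, i.e. no vertex reaches itself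
by a nonempty directed walk. -/
def DigraphAcyclic {V : Type*} (D : V → V → Prop) : Prop :=
  ∀ v, ¬ Relation.TransGen D v v

/-- The graph `G` together with `k` additional isolated vertices. -/
def addIsolated {V : Type*} (G : SimpleGraph V) (k : ℕ) : SimpleGraph (V ⊕ Fin k) where
  Adj a b := ∃ x y, a = Sum.inl x ∧ b = Sum.inl y ∧ G.Adj x y
  symm := by refine ⟨?_⟩; rintro a b ⟨x, y, rfl, rfl, h⟩; exact ⟨y, x, rfl, rfl, h.symm⟩
  loopless := by
    refine ⟨?_⟩
    rintro a ⟨x, y, rfl, hy, h⟩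
    obtain rfl := Sum.inl_injective hy
    exact G.loopless.irrefl x h

/-- `G` plus `k` isolated vertices is the competition graph of some acyclic digraph. -/
def IsCompetitionWitness {V : Type*} (G : SimpleGraph V) (k : ℕ) : Prop :=
  ∃ D : (V ⊕ Fin k) → (V ⊕ Fin k) → Prop,
    DigraphAcyclic D ∧ CompetitionGraph D = addIsolated G k

/-- The competition number of `G`: the least `k` such that `G` plus `k` isolated
vertices is the competition graph of an acyclic digraph. -/
noncomputable def compNum {V : Type*} (G : SimpleGraph V) : ℕ :=
  sInf {k | IsCompetitionWitness G k}

/-- The generalized edge clique cover number `θ_E(F; H)`: the minimum number of cliques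
of `G` contained in the vertex set `H` (i.e. cliques of the induced subgraph on `H`)
needed so that every edge in `F` has both endpoints in some clique of the family. -/
noncomputable def thetaEOn {V : Type*} (G : SimpleGraph V) (F : Set (Sym2 V)) (H : Set V) : ℕ :=
  sInf {n | ∃ f : Fin n → Set V,
    (∀ i, f i ⊆ H ∧ G.IsClique (f i)) ∧ ∀ e ∈ F, ∃ i, ∀ x ∈ e, x ∈ f i}

/-- The edge clique cover number `θ_E(G)`. -/
noncomputable def thetaE {V : Type*} (G : SimpleGraph V) : ℕ :=
  thetaEOn G G.edgeSet Set.univ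

/-- The vertex clique cover number of the subgraph of `G` induced on `S`: the minimum
number of cliques of `G` contained in `S` whose union covers `S`. -/
noncomputable def thetaVOn {V : Type*} (G : SimpleGraph V) (S : Set V) : ℕ :=
  sInf {n | ∃ f : Fin n → Set V,
    (∀ i, f i ⊆ S ∧ G.IsClique (f i)) ∧ ∀ v ∈ S, ∃ i, v ∈ f i}

/-- The closed neighborhood `N_G[U]` of a vertex subset. -/
def closedNbhd {V : Type*} (G : SimpleGraph V) (U : Set V) : Set V :=
  U ∪ {v | ∃ u ∈ U, G.Adj u v}

/-- The set `E_G[U]` of edges of `G` with at least one endpoint in `U`. -/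
def incidentEdges {V : Type*} (G : SimpleGraph V) (U : Set V) : Set (Sym2 V) :=
  {e | e ∈ G.edgeSet ∧ ∃ x ∈ e, x ∈ U}

/-- The 3-dimensional cube graph `Q_3`: vertices are functions `Fin 3 → Bool`,
adjacent iff they differ in exactly one coordinate. -/
def CubeGraph : SimpleGraph (Fin 3 → Bool) where
  Adj x y := (Finset.univ.filter fun i => x i ≠ y i).card = 1
  symm := by
    refine ⟨?_⟩
    intro x y h
    have : (Finset.univ.filter fun i => y i ≠ x i)
        = (Finset.univ.filter fun i => x i ≠ y i) := by
      apply Finset.filter_congr; intro i _; exact ne_comm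
    rw [this]; exact h
  loopless := by refine ⟨?_⟩; intro x h; simp at h


/-! ### Auxiliary material -/

section HexAux

abbrev HexV := Fin 3 → Bool
abbrev HexW := HexV ⊕ Fin 6

instance (priority := 5000) decEqHexW : DecidableEq HexW := fun a b =>
  match a, b with
  | Sum.inl x, Sum.inl y =>
    if h : x = y then isTrue (by rw [h]) else isFalse (fun hc => h (Sum.inl.inj hc))
  | Sum.inl _, Sum.inr _ => isFalse (fun hc => Sum.inl_ne_inr hc)
  | Sum.inr _, Sum.inl _ => isFalse (fun hc => Sum.inr_ne_inl hc)
  | Sum.inr i, Sum.inr j =>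
    if h : i = j then isTrue (by rw [h]) else isFalse (fun hc => h (Sum.inr.inj hc))

instance : DecidableRel CubeGraph.Adj :=
  fun x y => decidable_of_iff ((Finset.univ.filter fun i => x i ≠ y i).card = 1) Iff.rfl

lemma cube_triangle_free : ∀ a b c : HexV,
    CubeGraph.Adj a b → CubeGraph.Adj a c → CubeGraph.Adj b c → False := by decide

def vb (x y z : Bool) : HexV := fun i => if i.val = 0 then x else if i.val = 1 then y else z

def hexArcs : List (HexW × HexW) :=
  [ (.inl (vb false false false), .inl (vb false true true)),
    (.inl (vb false false true),  .inl (vb false true true)),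
    (.inl (vb false false true),  .inl (vb false true false)),
    (.inl (vb false true true),   .inl (vb false true false)),
    (.inl (vb false false false), .inl (vb true true false)),
    (.inl (vb false true false),  .inl (vb true true false)),
    (.inl (vb false true true),   .inl (vb true true true)),
    (.inl (vb false true false),  .inl (vb true true true)),
    (.inl (vb false true false),  .inl (vb true false true)),
    (.inl (vb true true false),   .inl (vb true false true)),
    (.inl (vb false true true),   .inl (vb true false false)),
    (.inl (vb true true true),    .inl (vb true false false)),
    (.inl (vb true true false),   .inr 0),
    (.inl (vb true true true),    .inr 0),
    (.inl (vb false false true),  .inr 1),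
    (.inl (vb true false true),   .inr 1),
    (.inl (vb true true true),    .inr 2),
    (.inl (vb true false true),   .inr 2),
    (.inl (vb false false false), .inr 3),
    (.inl (vb true false false),  .inr 3),
    (.inl (vb true true false),   .inr 4),
    (.inl (vb true false false),  .inr 4),
    (.inl (vb true false true),   .inr 5),
    (.inl (vb true false false),  .inr 5) ]

def hexD (a b : HexW) : Prop :=
  hexArcs.any (fun p => decide (p.1 = a) && decide (p.2 = b)) = true

instance : DecidableRel hexD := fun _ _ => instDecidableEqBool _ _

def hexRank : HexW → ℕ
  | .inr j => 8 + j
  | .inl v =>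
    if v = vb false false false then 0
    else if v = vb false false true then 1
    else if v = vb false true true then 2
    else if v = vb false true false then 3
    else if v = vb true true false then 4
    else if v = vb true true true then 5
    else if v = vb true false true then 6
    else 7

set_option maxHeartbeats 1000000 in
lemma hexRank_lt : ∀ a b, hexD a b → hexRank a < hexRank b := by decide +kernel

set_option maxHeartbeats 4000000 in
lemma hexKey : ∀ a b : HexW,
    (a ≠ b ∧ ∃ v, hexD a v ∧ hexD b v) ↔
      (∃ x y, a = Sum.inl x ∧ b = Sum.inl y ∧ CubeGraph.Adj x y) := by decide +kernel

lemma hexAcyclic : DigraphAcyclic hexD := by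
  intro v hv
  have mono : ∀ x y, Relation.TransGen hexD x y → hexRank x < hexRank y := by
    intro x y h
    induction h with
    | single h => exact hexRank_lt _ _ h
    | tail _ h ih => exact ih.trans (hexRank_lt _ _ h)
  exact lt_irrefl _ (mono v v hv)

lemma hexWitness : IsCompetitionWitness CubeGraph 6 := by
  refine ⟨hexD, hexAcyclic, ?_⟩
  refine SimpleGraph.ext ?_
  funext a b
  exact propext (hexKey a b)

/-- binary encoding of a cube vertex, to normalize edges as ordered pairs -/
def encV (x : HexV) : ℕ := (cond (x 0) 4 0) + (cond (x 1) 2 0) + (cond (x 2) 1 0)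

/-- the twelve edges of the cube, as normalized ordered pairs -/
def cubeP : Finset (HexV × HexV) :=
  Finset.univ.filter fun p => CubeGraph.Adj p.1 p.2 ∧ encV p.1 < encV p.2

lemma cubeP_card : cubeP.card = 12 := by decide

lemma cardHexV : Fintype.card HexV = 8 := by decide

lemma hexLower (k : ℕ) (h : IsCompetitionWitness CubeGraph k) : 6 ≤ k := by
  classical
  obtain ⟨D, hac, hcg⟩ := h
  -- common out-neighbors give cube edges
  have hAdj : ∀ x y : HexV, x ≠ y → (∃ w, D (Sum.inl x) w ∧ D (Sum.inl y) w) →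
      CubeGraph.Adj x y := by
    intro x y hxy hw
    have hA : (CompetitionGraph D).Adj (Sum.inl x) (Sum.inl y) := by
      exact ⟨fun hc => hxy (Sum.inl.inj hc), hw⟩
    rw [hcg] at hA
    obtain ⟨x', y', hx, hy, hA⟩ := hA
    obtain rfl : x = x' := Sum.inl.inj hx
    obtain rfl : y = y' := Sum.inl.inj hy
    exact hA
  -- every cube edge has a common prey
  have hEdge : ∀ p ∈ cubeP, ∃ w, D (Sum.inl p.1) w ∧ D (Sum.inl p.2) w := by
    intro p hp
    have hA : CubeGraph.Adj p.1 p.2 := (Finset.mem_filter.mp hp).2.1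
    have h2 : (addIsolated CubeGraph k).Adj (Sum.inl p.1) (Sum.inl p.2) :=
      ⟨p.1, p.2, rfl, rfl, hA⟩
    rw [← hcg] at h2
    exact h2.2
  have hlt : ∀ p ∈ cubeP, encV p.1 < encV p.2 := fun p hp => (Finset.mem_filter.mp hp).2.2
  have hne : ∀ p ∈ cubeP, p.1 ≠ p.2 := by
    intro p hp he
    have := hlt p hp
    rw [he] at this
    exact lt_irrefl _ this
  -- choose a prey for each edge
  let φ : HexV × HexV → (HexV ⊕ Fin k) := fun p =>
    if h : ∃ w, D (Sum.inl p.1) w ∧ D (Sum.inl p.2) w then h.choose else Sum.inl p.1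
  have hφ : ∀ p ∈ cubeP, D (Sum.inl p.1) (φ p) ∧ D (Sum.inl p.2) (φ p) := by
    intro p hp
    have h := hEdge p hp
    simp only [φ, dif_pos h]
    exact h.choose_spec
  -- injectivity from triangle-freeness
  have hinj : Set.InjOn φ ↑cubeP := by
    intro p hp q hq hpq
    rw [Finset.mem_coe] at hp hq
    have Dp1 := (hφ p hp).1
    have Dp2 := (hφ p hp).2
    have Dq1 := (hφ q hq).1
    have Dq2 := (hφ q hq).2
    rw [hpq] at Dp1 Dp2
    have adj : ∀ u v : HexV, u ≠ v → D (Sum.inl u) (φ q) → D (Sum.inl v) (φ q) →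
        CubeGraph.Adj u v := fun u v huv h1 h2 => hAdj u v huv ⟨φ q, h1, h2⟩
    have hp12 : CubeGraph.Adj p.1 p.2 := (Finset.mem_filter.mp hp).2.1
    have hq1mem : q.1 = p.1 ∨ q.1 = p.2 := by
      by_contra hc
      push_neg at hc
      exact cube_triangle_free q.1 p.1 p.2 (adj _ _ hc.1 Dq1 Dp1) (adj _ _ hc.2 Dq1 Dp2) hp12
    have hq2mem : q.2 = p.1 ∨ q.2 = p.2 := by
      by_contra hc
      push_neg at hc
      exact cube_triangle_free q.2 p.1 p.2 (adj _ _ hc.1 Dq2 Dp1) (adj _ _ hc.2 Dq2 Dp2) hp12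
    have ep := hlt p hp
    have eq' := hlt q hq
    rcases hq1mem with h1 | h1 <;> rcases hq2mem with h2 | h2
    · rw [h1, h2] at eq'; exact absurd eq' (lt_irrefl _)
    · exact Prod.ext h1.symm h2.symm
    · rw [h1, h2] at eq'; exact absurd (eq'.trans ep) (lt_irrefl _)
    · rw [h1, h2] at eq'; exact absurd eq' (lt_irrefl _)
  -- two minimal vertices are never preys
  haveI : IsTrans (HexV ⊕ Fin k) (Relation.TransGen D) := ⟨fun _ _ _ => Relation.TransGen.trans⟩
  haveI : IsIrrefl (HexV ⊕ Fin k) (Relation.TransGen D) := ⟨hac⟩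
  have hwf : WellFounded (Relation.TransGen D) := Finite.wellFounded_of_trans_of_irrefl _
  obtain ⟨m1, -, hm1⟩ := hwf.has_min Set.univ ⟨Sum.inl (fun _ => false), trivial⟩
  have hDm1 : ∀ u, ¬ D u m1 := fun u hu => hm1 u trivial (Relation.TransGen.single hu)
  have hvne : (Sum.inl (fun _ => true) : HexV ⊕ Fin k) ≠ Sum.inl (fun _ => false) := by
    intro hc
    have := congrFun (Sum.inl.inj hc) 0
    simp at this
  have hS : ({x | x ≠ m1} : Set (HexV ⊕ Fin k)).Nonempty := by
    rcases eq_or_ne (Sum.inl (fun _ => false) : HexV ⊕ Fin k) m1 with h | h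
    · exact ⟨Sum.inl (fun _ => true), by rw [← h]; exact hvne⟩
    · exact ⟨_, h⟩
  obtain ⟨m2, hm2ne, hm2⟩ := hwf.has_min {x | x ≠ m1} hS
  have hDm2 : ∀ u, u ≠ m1 → ¬ D u m2 := fun u hu h => hm2 u hu (Relation.TransGen.single h)
  -- preys avoid m1, m2
  have himg : ∀ p ∈ cubeP, φ p ∈ (Finset.univ \ {m1, m2} : Finset (HexV ⊕ Fin k)) := by
    intro p hp
    rw [Finset.mem_sdiff]
    refine ⟨Finset.mem_univ _, ?_⟩
    rw [Finset.mem_insert, Finset.mem_singleton]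
    push_neg
    constructor
    · intro he
      exact hDm1 _ (he ▸ (hφ p hp).1)
    · intro he
      by_cases h1 : (Sum.inl p.1 : HexV ⊕ Fin k) = m1
      · have h2 : (Sum.inl p.2 : HexV ⊕ Fin k) ≠ m1 := by
          rw [← h1]
          exact fun hc => hne p hp (Sum.inl.inj hc).symm
        exact hDm2 _ h2 (he ▸ (hφ p hp).2)
      · exact hDm2 _ h1 (he ▸ (hφ p hp).1)
  have hcard := Finset.card_le_card_of_injOn φ himg hinj
  have hm12 : m1 ≠ m2 := fun hc => hm2ne hc.symm
  have hc2 : ({m1, m2} : Finset (HexV ⊕ Fin k)).card = 2 := Finset.card_pair hm12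
  rw [cubeP_card, Finset.card_sdiff_of_subset (Finset.subset_univ _), Finset.card_univ, hc2] at hcard
  have hcW : Fintype.card (HexV ⊕ Fin k) = 8 + k := by
    rw [Fintype.card_sum, cardHexV, Fintype.card_fin]
  rw [hcW] at hcard
  omega

end HexAux

theorem competition_number_hexahedron :
    compNum CubeGraph = 6 := by
  have h6 := hexWitness
  apply le_antisymm
  · exact Nat.sInf_le h6
  · exact le_csInf ⟨6, h6⟩ fun n hn => hexLower n hn
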